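/- For H > 0, with M(H,u,ξ) = (1/(gπ))·max(0, 2gH − (ξ−u)²)^{1/2} and H_K(f,ξ,z) = (ξ²/2)·f + (g²π²/6)·f³ + g·z·f, one has ∫_ℝ ξ·H_K(M(H,u,ξ), ξ, z_b) dξ = u·((H/2)·u² + (g/2)·H² + g·H·z_b + (g/2)·H²). -/
import Mathlib


open MeasureTheory Real

theorem stmt4 (g H u zb : ℝ) (hg : 0 < g) (hH : 0 < H) :
    (∫ ξ : ℝ, ξ *
        ((ξ ^ 2 / 2) * ((1 / (g * Real.pi)) * Real.sqrt (max 0 (2 * g * H - (ξ - u) ^ 2)))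
          + (g ^ 2 * Real.pi ^ 2 / 6) *
              ((1 / (g * Real.pi)) * Real.sqrt (max 0 (2 * g * H - (ξ - u) ^ 2))) ^ 3
          + g * zb * ((1 / (g * Real.pi)) * Real.sqrt (max 0 (2 * g * H - (ξ - u) ^ 2))))) =
      u * (H / 2 * u ^ 2 + g / 2 * H ^ 2 + g * H * zb + g / 2 * H ^ 2) := by
  have hπ : (0:ℝ) < Real.pi := Real.pi_pos
  set a : ℝ := Real.sqrt (2 * g * H) with ha_def
  have h2gH : (0:ℝ) < 2 * g * H := by positivity
  have ha : 0 < a := Real.sqrt_pos.mpr h2gH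
  have ha2 : a ^ 2 = 2 * g * H := Real.sq_sqrt h2gH.le
  set Q : ℝ → ℝ := fun x => (u + x) ^ 3 / 2 + g * zb * (u + x) + (u + x) * (a ^ 2 - x ^ 2) / 6
    with hQ_def
  set G : ℝ → ℝ := fun x => Real.sqrt (max 0 (a ^ 2 - x ^ 2)) * Q x with hG_def
  set F : ℝ → ℝ := fun x => (1 / (g * Real.pi)) * G x with hF_def
  -- Step 1: pointwise identity
  have hpt : ∀ ξ : ℝ,
      ξ * ((ξ ^ 2 / 2) * ((1 / (g * Real.pi)) * Real.sqrt (max 0 (2 * g * H - (ξ - u) ^ 2)))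
          + (g ^ 2 * Real.pi ^ 2 / 6) *
              ((1 / (g * Real.pi)) * Real.sqrt (max 0 (2 * g * H - (ξ - u) ^ 2))) ^ 3
          + g * zb * ((1 / (g * Real.pi)) * Real.sqrt (max 0 (2 * g * H - (ξ - u) ^ 2))))
        = F (ξ - u) := by
    intro ξ
    have hrw : 2 * g * H - (ξ - u) ^ 2 = a ^ 2 - (ξ - u) ^ 2 := by rw [ha2]
    rw [hrw]
    set t : ℝ := max 0 (a ^ 2 - (ξ - u) ^ 2) with ht_def
    have ht0 : 0 ≤ t := le_max_left _ _
    have hsq : Real.sqrt t * Real.sqrt t = t := Real.mul_self_sqrt ht0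
    simp only [hF_def, hG_def, hQ_def]
    rw [← ht_def]
    rcases le_or_gt (a ^ 2 - (ξ - u) ^ 2) 0 with h | h
    · have ht : t = 0 := max_eq_left h
      rw [ht]
      simp
    · have ht : t = a ^ 2 - (ξ - u) ^ 2 := max_eq_right h.le
      have key : ξ * ((ξ ^ 2 / 2) * ((1 / (g * Real.pi)) * Real.sqrt t)
          + (g ^ 2 * Real.pi ^ 2 / 6) * ((1 / (g * Real.pi)) * Real.sqrt t) ^ 3
          + g * zb * ((1 / (g * Real.pi)) * Real.sqrt t))
          = (1 / (g * Real.pi)) * (Real.sqrt t * (ξ ^ 3 / 2 + g * zb * ξ + ξ * t / 6)) := by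
        have hgπ : g * Real.pi ≠ 0 := by positivity
        field_simp
        ring_nf
        rw [show Real.sqrt t ^ 3 = t * Real.sqrt t by
          rw [pow_succ, pow_two, hsq]]
        ring
      rw [key, ht]
      ring
  simp_rw [hpt]
  -- Step 2: reduce to interval integral
  have hsupp : ∀ ξ : ℝ, ξ ∉ Set.Ioc (u - a) (u + a) → F (ξ - u) = 0 := by
    intro ξ hξ
    simp only [Set.mem_Ioc, not_and_or, not_lt, not_le] at hξ
    have habs : a ^ 2 - (ξ - u) ^ 2 ≤ 0 := by
      rcases hξ with h | h
      · nlinarith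
      · nlinarith
    have : max 0 (a ^ 2 - (ξ - u) ^ 2) = 0 := max_eq_left habs
    simp [hF_def, hG_def, this]
  have hle : u - a ≤ u + a := by linarith
  rw [← MeasureTheory.setIntegral_eq_integral_of_forall_compl_eq_zero hsupp,
    ← intervalIntegral.integral_of_le hle]
  rw [intervalIntegral.integral_comp_sub_right F u]
  have he1 : u - a - u = -a := by ring
  have he2 : u + a - u = a := by ring
  rw [he1, he2]
  -- pull out the constant
  have hpull : (∫ x in (-a)..a, F x) = (1 / (g * Real.pi)) * ∫ x in (-a)..a, G x := by
    simp only [hF_def]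
    exact intervalIntegral.integral_const_mul _ _
  rw [hpull]
  -- Step 3: substitution x = a sin θ
  have hGcont : Continuous G := by
    simp only [hG_def, hQ_def]
    exact (Real.continuous_sqrt.comp
      (continuous_const.max (continuous_const.sub (continuous_pow 2)))).mul (by fun_prop)
  have hsub : (∫ x in (-a)..a, G x) =
      ∫ θ in (-(Real.pi/2))..(Real.pi/2), (G ∘ fun θ => a * Real.sin θ) θ * (a * Real.cos θ) := by
    rw [intervalIntegral.integral_comp_mul_deriv
      (f := fun θ => a * Real.sin θ) (f' := fun θ => a * Real.cos θ)
      (fun x _ => (Real.hasDerivAt_sin x).const_mul a)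
      ((continuous_const.mul Real.continuous_cos).continuousOn) hGcont]
    rw [Real.sin_neg, Real.sin_pi_div_two]
    norm_num
  rw [hsub]
  -- Step 4: simplify the integrand on the interval
  have hcongr : (∫ θ in (-(Real.pi/2))..(Real.pi/2),
        (G ∘ fun θ => a * Real.sin θ) θ * (a * Real.cos θ)) =
      ∫ θ in (-(Real.pi/2))..(Real.pi/2),
        ((a ^ 2 * (u ^ 3 / 2 + g * zb * u + u * a ^ 2 / 6)) * Real.cos θ ^ 2
          + (a ^ 3 * (3 * u ^ 2 / 2 + g * zb + a ^ 2 / 6)) * (Real.sin θ * Real.cos θ ^ 2)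
          + (a ^ 4 * (4 * u / 3)) * (Real.sin θ ^ 2 * Real.cos θ ^ 2)
          + (a ^ 5 * (1 / 3)) * (Real.sin θ ^ 3 * Real.cos θ ^ 2)) := by
    apply intervalIntegral.integral_congr
    intro θ hθ
    rw [Set.uIcc_of_le (by linarith : -(Real.pi/2) ≤ Real.pi/2)] at hθ
    have hcos : 0 ≤ Real.cos θ := Real.cos_nonneg_of_mem_Icc (by
      constructor
      · exact hθ.1
      · exact hθ.2)
    have h1 : a ^ 2 - (a * Real.sin θ) ^ 2 = (a * Real.cos θ) ^ 2 := by
      have := Real.sin_sq_add_cos_sq θ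
      nlinarith
    have h2 : Real.sqrt (max 0 (a ^ 2 - (a * Real.sin θ) ^ 2)) = a * Real.cos θ := by
      rw [h1, max_eq_right (by positivity), Real.sqrt_sq (by positivity)]
    simp only [Function.comp, hG_def, hQ_def, h2]
    ring
  rw [hcongr]
  -- Step 5: compute the trig integrals
  have hint1 : (∫ θ in (-(Real.pi/2))..(Real.pi/2), Real.cos θ ^ 2) = Real.pi / 2 := by
    rw [integral_cos_sq]
    simp [Real.cos_pi_div_two]
  have hint2 : (∫ θ in (-(Real.pi/2))..(Real.pi/2), Real.sin θ * Real.cos θ ^ 2) = 0 := by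
    rw [integral_sin_mul_cos_sq]
    simp [Real.cos_pi_div_two]
  have hint3 : (∫ θ in (-(Real.pi/2))..(Real.pi/2), Real.sin θ ^ 2 * Real.cos θ ^ 2)
      = Real.pi / 8 := by
    rw [integral_sin_sq_mul_cos_sq]
    have : Real.sin (4 * (Real.pi/2)) = 0 := by
      rw [show 4 * (Real.pi/2) = 2 * Real.pi by ring, Real.sin_two_pi]
    have h2 : Real.sin (4 * -(Real.pi/2)) = 0 := by
      rw [show 4 * -(Real.pi/2) = -(2 * Real.pi) by ring, Real.sin_neg, Real.sin_two_pi, neg_zero]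
    rw [this, h2]
    ring
  have hint4 : (∫ θ in (-(Real.pi/2))..(Real.pi/2), Real.sin θ ^ 3 * Real.cos θ ^ 2) = 0 := by
    have h := @integral_sin_pow_odd_mul_cos_pow (-(Real.pi/2)) (Real.pi/2) 1 2
    norm_num [Real.cos_pi_div_two, Real.cos_neg] at h
    exact h
  -- integrability
  have i1 : IntervalIntegrable (fun θ => Real.cos θ ^ 2) volume (-(Real.pi/2)) (Real.pi/2) :=
    (by fun_prop : Continuous fun θ : ℝ => Real.cos θ ^ 2).intervalIntegrable _ _
  have i2 : IntervalIntegrable (fun θ => Real.sin θ * Real.cos θ ^ 2) volume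
      (-(Real.pi/2)) (Real.pi/2) :=
    (by fun_prop : Continuous fun θ : ℝ => Real.sin θ * Real.cos θ ^ 2).intervalIntegrable _ _
  have i3 : IntervalIntegrable (fun θ => Real.sin θ ^ 2 * Real.cos θ ^ 2) volume
      (-(Real.pi/2)) (Real.pi/2) :=
    (by fun_prop : Continuous fun θ : ℝ => Real.sin θ ^ 2 * Real.cos θ ^ 2).intervalIntegrable _ _
  have i4 : IntervalIntegrable (fun θ => Real.sin θ ^ 3 * Real.cos θ ^ 2) volume
      (-(Real.pi/2)) (Real.pi/2) :=
    (by fun_prop : Continuous fun θ : ℝ => Real.sin θ ^ 3 * Real.cos θ ^ 2).intervalIntegrable _ _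
  set A := a ^ 2 * (u ^ 3 / 2 + g * zb * u + u * a ^ 2 / 6)
  set B := a ^ 3 * (3 * u ^ 2 / 2 + g * zb + a ^ 2 / 6)
  set C := a ^ 4 * (4 * u / 3)
  set D := a ^ 5 * (1 / 3)
  rw [intervalIntegral.integral_add (((i1.const_mul A).add (i2.const_mul B)).add (i3.const_mul C))
        (i4.const_mul D),
      intervalIntegral.integral_add ((i1.const_mul A).add (i2.const_mul B)) (i3.const_mul C),
      intervalIntegral.integral_add (i1.const_mul A) (i2.const_mul B),
      intervalIntegral.integral_const_mul, intervalIntegral.integral_const_mul,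
      intervalIntegral.integral_const_mul, intervalIntegral.integral_const_mul,
      hint1, hint2, hint3, hint4]
  -- Step 6: final arithmetic
  simp only [A, C, B, D]
  have hgπ : g * Real.pi ≠ 0 := by positivity
  rw [show a ^ 4 = (a ^ 2) ^ 2 by ring, ha2]
  field_simp
  ring
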